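/- arXiv:2405.06530 — 5 statements merged into one kernel-verified Lean document; each statement's English description precedes it below -/
import Mathlib

section
/- Let E be a real inner product space, m ≥ 2, let y₁, …, y_m ∈ E be points and σ₁, …, σ_m > 0 real numbers. Suppose i is an index with ‖y_j‖ ≤ ‖y_i‖ for all j, that y_i ≠ 0, and that y_j ≠ y_i for every j ≠ i. Then ⟨ Σ_{j≠i} σ_j (y_i − y_j)/‖y_i − y_j‖² , y_i/‖y_i‖ ⟩ ≥ (Σ_{j≠i} σ_j) / (2‖y_i‖); in particular ‖ Σ_{j≠i} σ_j (y_i − y_j)/‖y_i − y_j‖² ‖ ≥ (Σ_{j≠i} σ_j) / (2‖y_i‖). -/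
open scoped RealInnerProductSpace

/-- Quantitative lower bound on the gradient of the logarithmic interaction term:
if `‖y j‖ ≤ ‖y i‖` for all `j`, `y i ≠ 0` and `y j ≠ y i` for `j ≠ i`, then
`⟨∑_{j≠i} σ_j (y_i − y_j)/‖y_i − y_j‖², y_i/‖y_i‖⟩ ≥ (∑_{j≠i} σ_j)/(2‖y_i‖)`,
and in particular the norm of the sum obeys the same lower bound. -/
theorem log_interaction_gradient_lower_bound
    {E : Type*} [NormedAddCommGroup E] [InnerProductSpace ℝ E]
    {m : ℕ} (hm : 2 ≤ m) (y : Fin m → E) (σ : Fin m → ℝ) (hσ : ∀ j, 0 < σ j)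
    (i : Fin m) (hmax : ∀ j, ‖y j‖ ≤ ‖y i‖) (hyi : y i ≠ 0)
    (hne : ∀ j, j ≠ i → y j ≠ y i) :
    (∑ j ∈ Finset.univ \ {i}, σ j) / (2 * ‖y i‖) ≤
      ⟪∑ j ∈ Finset.univ \ {i}, (σ j / ‖y i - y j‖ ^ 2) • (y i - y j), ‖y i‖⁻¹ • y i⟫ ∧
    (∑ j ∈ Finset.univ \ {i}, σ j) / (2 * ‖y i‖) ≤
      ‖∑ j ∈ Finset.univ \ {i}, (σ j / ‖y i - y j‖ ^ 2) • (y i - y j)‖ := by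
  have hyin : (0:ℝ) < ‖y i‖ := norm_pos_iff.mpr hyi
  have hfirst : (∑ j ∈ Finset.univ \ {i}, σ j) / (2 * ‖y i‖) ≤
      ⟪∑ j ∈ Finset.univ \ {i}, (σ j / ‖y i - y j‖ ^ 2) • (y i - y j), ‖y i‖⁻¹ • y i⟫ := by
    rw [sum_inner, Finset.sum_div]
    refine Finset.sum_le_sum fun j hj => ?_
    have hji : j ≠ i := by
      simp only [Finset.mem_sdiff, Finset.mem_singleton] at hj
      exact hj.2
    have hd : y i - y j ≠ 0 := sub_ne_zero.mpr fun h => hne j hji h.symm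
    have hdn : (0:ℝ) < ‖y i - y j‖ := norm_pos_iff.mpr hd
    have hkey : ‖y i - y j‖ ^ 2 / 2 ≤ ⟪y i - y j, y i⟫ := by
      have h1 : ⟪y i - y j, y i⟫ = ‖y i‖ ^ 2 - ⟪y i, y j⟫ := by
        rw [inner_sub_left, real_inner_self_eq_norm_sq, real_inner_comm]
      have h2 : ‖y i - y j‖ ^ 2 = ‖y i‖ ^ 2 - 2 * ⟪y i, y j⟫ + ‖y j‖ ^ 2 :=
        norm_sub_sq_real (y i) (y j)
      have h3 : ‖y j‖ ^ 2 ≤ ‖y i‖ ^ 2 := by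
        have := hmax j
        nlinarith [norm_nonneg (y j)]
      nlinarith
    rw [real_inner_smul_left, real_inner_smul_right]
    have hσj := (hσ j).le
    have h4 : σ j / ‖y i - y j‖ ^ 2 * (‖y i‖⁻¹ * (‖y i - y j‖ ^ 2 / 2)) ≤
        σ j / ‖y i - y j‖ ^ 2 * (‖y i‖⁻¹ * ⟪y i - y j, y i⟫) := by
      apply mul_le_mul_of_nonneg_left _ (by positivity)
      exact mul_le_mul_of_nonneg_left hkey (by positivity)
    calc σ j / (2 * ‖y i‖) = σ j / ‖y i - y j‖ ^ 2 * (‖y i‖⁻¹ * (‖y i - y j‖ ^ 2 / 2)) := by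
          field_simp
      _ ≤ _ := h4
  refine ⟨hfirst, hfirst.trans ?_⟩
  calc ⟪∑ j ∈ Finset.univ \ {i}, (σ j / ‖y i - y j‖ ^ 2) • (y i - y j), ‖y i‖⁻¹ • y i⟫
      ≤ ‖∑ j ∈ Finset.univ \ {i}, (σ j / ‖y i - y j‖ ^ 2) • (y i - y j)‖ * ‖‖y i‖⁻¹ • y i‖ :=
        real_inner_le_norm _ _
    _ = ‖∑ j ∈ Finset.univ \ {i}, (σ j / ‖y i - y j‖ ^ 2) • (y i - y j)‖ := by
        rw [norm_smul, norm_inv, norm_norm, inv_mul_cancel₀ hyin.ne', mul_one]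
end

section
/- The Lebesgue integral over the set {s ∈ ℝ : |s| ≥ 1} of the function s ↦ log(s²)·(s² − 1)/(s² + 1)² equals π. -/
open MeasureTheory Set Filter Real Topology

private noncomputable def fker (s : ℝ) : ℝ := Real.log (s ^ 2) * ((s ^ 2 - 1) / (s ^ 2 + 1) ^ 2)

private noncomputable def Fant (s : ℝ) : ℝ :=
  2 * (Real.arctan s - s * Real.log s / (s ^ 2 + 1))

private lemma fker_even (s : ℝ) : fker (-s) = fker s := by
  simp [fker, neg_sq]

private lemma hderiv : ∀ x ∈ Ici (1:ℝ), HasDerivAt Fant (fker x) x := by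
  intro x hx
  have hx0 : (0:ℝ) < x := lt_of_lt_of_le one_pos hx
  have hne : (x:ℝ) ^ 2 + 1 ≠ 0 := by positivity
  have h1 : HasDerivAt (fun s : ℝ => s * Real.log s) (1 * Real.log x + x * x⁻¹) x :=
    (hasDerivAt_id x).mul (Real.hasDerivAt_log hx0.ne')
  have h2 : HasDerivAt (fun s : ℝ => s ^ 2 + 1) (2 * x) x := by
    simpa using ((hasDerivAt_pow 2 x).add_const 1)
  have h3 := h1.div h2 hne
  have h4 := ((Real.hasDerivAt_arctan x).sub h3).const_mul 2
  convert h4 using 1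
  case e'_4 => rfl
  case e'_5 => rfl
  case e'_8 => rfl
  have hlog : Real.log (x ^ 2) = 2 * Real.log x := by
    rw [Real.log_pow]; push_cast; ring
  rw [fker, hlog]
  field_simp
  ring

private lemma hpos : ∀ x ∈ Ioi (1:ℝ), 0 ≤ fker x := by
  intro x hx
  have hx1 : (1:ℝ) ≤ x := le_of_lt hx
  have hsq : (1:ℝ) ≤ x ^ 2 := by nlinarith
  have h1 : 0 ≤ Real.log (x ^ 2) := Real.log_nonneg hsq
  have h2 : 0 ≤ (x ^ 2 - 1) / (x ^ 2 + 1) ^ 2 := by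
    apply div_nonneg (by nlinarith) (by positivity)
  exact mul_nonneg h1 h2

private lemma htends : Tendsto Fant atTop (𝓝 Real.pi) := by
  have h1 : Tendsto Real.arctan atTop (𝓝 (Real.pi / 2)) :=
    Real.tendsto_arctan_atTop.mono_right nhdsWithin_le_nhds
  have h2 : Tendsto (fun s : ℝ => s * Real.log s / (s ^ 2 + 1)) atTop (𝓝 0) := by
    have ha : Tendsto (fun s : ℝ => Real.log s / s) atTop (𝓝 0) :=
      Real.isLittleO_log_id_atTop.tendsto_div_nhds_zero
    have hb : Tendsto (fun s : ℝ => s ^ 2 / (s ^ 2 + 1)) atTop (𝓝 1) := by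
      have hc : Tendsto (fun s : ℝ => s ^ 2 + 1) atTop atTop :=
        (tendsto_pow_atTop two_ne_zero).atTop_add tendsto_const_nhds
      have hd : Tendsto (fun s : ℝ => 1 - (s ^ 2 + 1)⁻¹) atTop (𝓝 (1 - 0)) :=
        tendsto_const_nhds.sub (tendsto_inv_atTop_zero.comp hc)
      rw [sub_zero] at hd
      refine hd.congr fun s => ?_
      have : (s:ℝ) ^ 2 + 1 ≠ 0 := by positivity
      field_simp
      ring
    have := ha.mul hb
    rw [zero_mul] at this
    refine this.congr' ?_
    filter_upwards [eventually_gt_atTop (0:ℝ)] with s hs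
    have : (s:ℝ) ^ 2 + 1 ≠ 0 := by positivity
    field_simp
  have := (h1.sub h2).const_mul 2
  have heq : 2 * (Real.pi / 2 - 0) = Real.pi := by ring
  rw [heq] at this
  exact this

private lemma key : ∫ s in Ioi (1:ℝ), fker s = Real.pi / 2 := by
  rw [integral_Ioi_of_hasDerivAt_of_nonneg' hderiv hpos htends]
  simp [Fant, Real.arctan_one]
  ring

private lemma hInt_Ioi : IntegrableOn fker (Ioi (1:ℝ)) :=
  integrableOn_Ioi_deriv_of_nonneg' hderiv hpos htends

private lemma hInt_Ici : IntegrableOn fker (Ici (1:ℝ)) := by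
  rw [integrableOn_Ici_iff_integrableOn_Ioi]; exact hInt_Ioi

private lemma hInt_Iic : IntegrableOn fker (Iic (-1:ℝ)) := by
  have A : MeasurableEmbedding (fun x : ℝ => -x) :=
    (Homeomorph.neg ℝ).isClosedEmbedding.measurableEmbedding
  have h1 : (volume : Measure ℝ).restrict (Iic (-1))
      = Measure.map (fun x : ℝ => -x) ((volume : Measure ℝ).restrict (Ici 1)) := by
    conv_lhs => rw [← Measure.map_neg_eq_self (volume : Measure ℝ)]
    rw [Measure.restrict_map A.measurable measurableSet_Iic]
    congr 1
    ext x
    simp [neg_le]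
  rw [IntegrableOn, h1, A.integrable_map_iff]
  have : (fker ∘ fun x : ℝ => -x) = fker := by
    funext x; simp [Function.comp, fker_even]
  rw [this]
  exact hInt_Ici

/-- `∫_{|s| ≥ 1} log(s²) (s² − 1)/(s² + 1)² ds = π`. -/
theorem integral_log_sq_mul_kernel_eq_pi :
    ∫ s in {s : ℝ | 1 ≤ |s|}, Real.log (s ^ 2) * ((s ^ 2 - 1) / (s ^ 2 + 1) ^ 2) = Real.pi := by
  have hset : {s : ℝ | 1 ≤ |s|} = Iic (-1) ∪ Ici 1 := by
    ext s
    simp only [mem_setOf_eq, mem_union, mem_Iic, mem_Ici, le_abs]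
    constructor
    · rintro (h | h)
      · right; exact h
      · left; linarith
    · rintro (h | h)
      · right; linarith
      · left; exact h
  have hdisj : Disjoint (Iic (-1:ℝ)) (Ici 1) := by
    rw [Set.Iic_disjoint_Ici]
    norm_num
  have hfk : (fun s : ℝ => Real.log (s ^ 2) * ((s ^ 2 - 1) / (s ^ 2 + 1) ^ 2)) = fker := rfl
  have hIic : ∫ s in Iic (-1:ℝ), fker s = ∫ s in Ioi (1:ℝ), fker s := by
    have := integral_comp_neg_Iic (-1 : ℝ) fker
    simp only [fker_even, neg_neg] at this
    exact this
  calc ∫ s in {s : ℝ | 1 ≤ |s|}, Real.log (s ^ 2) * ((s ^ 2 - 1) / (s ^ 2 + 1) ^ 2)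
      = ∫ s in Iic (-1) ∪ Ici 1, fker s := by rw [hset, hfk]
    _ = (∫ s in Iic (-1:ℝ), fker s) + ∫ s in Ici (1:ℝ), fker s :=
        setIntegral_union hdisj measurableSet_Ici hInt_Iic hInt_Ici
    _ = (∫ s in Ioi (1:ℝ), fker s) + ∫ s in Ioi (1:ℝ), fker s := by
        rw [hIic, integral_Ici_eq_integral_Ioi]
    _ = Real.pi := by rw [key]; ring
end

section
/- There exists a constant C > 0 such that for all ϱ ∈ (0,1], all a ∈ (0, ϱ], all b ∈ ℝ with |b| ≤ ϱ, and all s ≥ 1 satisfying a² + (ϱ·s + b)² ≥ 1, one has 0 ≤ log(√(a² + (ϱ·s + b)²)) · (s² − 1)/(s² + 1)² ≤ C · ϱ^{1/2} / s^{3/2}. -/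
set_option maxHeartbeats 1000000 in
/-- Uniform pointwise tail bound: there is `C > 0` such that for all
`ϱ ∈ (0,1]`, `a ∈ (0,ϱ]`, `|b| ≤ ϱ`, and `s ≥ 1` with `a² + (ϱs + b)² ≥ 1`,
`0 ≤ log(√(a² + (ϱs + b)²)) (s² − 1)/(s² + 1)² ≤ C ϱ^{1/2}/s^{3/2}`. -/
theorem log_kernel_tail_bound :
    ∃ C > 0, ∀ ϱ a b s : ℝ, 0 < ϱ → ϱ ≤ 1 → 0 < a → a ≤ ϱ → |b| ≤ ϱ → 1 ≤ s →
      1 ≤ a ^ 2 + (ϱ * s + b) ^ 2 →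
      0 ≤ Real.log (Real.sqrt (a ^ 2 + (ϱ * s + b) ^ 2)) * ((s ^ 2 - 1) / (s ^ 2 + 1) ^ 2) ∧
      Real.log (Real.sqrt (a ^ 2 + (ϱ * s + b) ^ 2)) * ((s ^ 2 - 1) / (s ^ 2 + 1) ^ 2) ≤
        C * ϱ ^ ((1 : ℝ) / 2) / s ^ ((3 : ℝ) / 2) := by
  refine ⟨5, by norm_num, ?_⟩
  intro ϱ a b s hϱ hϱ1 ha ha' hb hs hR
  obtain ⟨hb1, hb2⟩ := abs_le.mp hb
  have hs0 : (0 : ℝ) < s := by linarith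
  have hR0 : (0 : ℝ) < a ^ 2 + (ϱ * s + b) ^ 2 := by linarith
  set u : ℝ := ϱ * s with hu
  have hu0 : 0 < u := mul_pos hϱ hs0
  have hϱs : ϱ ≤ ϱ * s := le_mul_of_one_le_right hϱ.le hs
  have hR5 : a ^ 2 + (ϱ * s + b) ^ 2 ≤ 5 * u ^ 2 := by
    have h1 : 0 ≤ ϱ * s + b := by linarith
    have h2 : ϱ * s + b ≤ 2 * (ϱ * s) := by linarith
    have h3 : (ϱ * s + b) ^ 2 ≤ (2 * (ϱ * s)) ^ 2 := by nlinarith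
    have h4 : a ^ 2 ≤ (ϱ * s) ^ 2 := by nlinarith
    nlinarith
  have hu4 : (1 : ℝ) / 4 ≤ u := by nlinarith [hu0.le, sq_nonneg (u - 1/4)]
  have hsu : (1 : ℝ) / 2 ≤ Real.sqrt u := by
    have h := Real.sqrt_le_sqrt hu4
    rwa [show (1:ℝ)/4 = (1/2)^2 by norm_num, Real.sqrt_sq (by norm_num : (0:ℝ) ≤ 1/2)] at h
  have hsu0 : 0 ≤ Real.sqrt u := Real.sqrt_nonneg u
  -- log bound
  have hlog : Real.log (Real.sqrt (a ^ 2 + (ϱ * s + b) ^ 2)) ≤ 2 * Real.sqrt u := by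
    rw [Real.log_sqrt hR0.le]
    have h1 : Real.log (a ^ 2 + (ϱ * s + b) ^ 2) ≤ Real.log (5 * u ^ 2) :=
      Real.log_le_log hR0 hR5
    have h2 : Real.log (5 * u ^ 2) = Real.log 5 + 2 * Real.log u := by
      rw [Real.log_mul (by norm_num) (by positivity), Real.log_pow]
      push_cast; ring
    have h3 : Real.log u ≤ 2 * Real.sqrt u - 2 := by
      have := Real.log_le_sub_one_of_pos (Real.sqrt_pos.mpr hu0)
      have hls : Real.log (Real.sqrt u) = Real.log u / 2 := Real.log_sqrt hu0.le
      linarith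
    have h5 : Real.log 5 ≤ 2 * Real.sqrt 5 - 2 := by
      have := Real.log_le_sub_one_of_pos (show (0:ℝ) < Real.sqrt 5 by positivity)
      have hls : Real.log (Real.sqrt 5) = Real.log 5 / 2 := Real.log_sqrt (by norm_num)
      linarith
    have h6 : Real.sqrt 5 ≤ 9/4 := by
      have h := Real.sqrt_le_sqrt (show (5:ℝ) ≤ (9/4)^2 by norm_num)
      rwa [Real.sqrt_sq (by norm_num : (0:ℝ) ≤ 9/4)] at h
    linarith
  have hlog0 : 0 ≤ Real.log (Real.sqrt (a ^ 2 + (ϱ * s + b) ^ 2)) := by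
    rw [Real.log_sqrt hR0.le]
    have := Real.log_nonneg hR
    linarith
  have hq0 : 0 ≤ (s ^ 2 - 1) / (s ^ 2 + 1) ^ 2 := by
    apply div_nonneg <;> nlinarith
  refine ⟨mul_nonneg hlog0 hq0, ?_⟩
  have hq1 : (s ^ 2 - 1) / (s ^ 2 + 1) ^ 2 ≤ 1 / s ^ 2 := by
    rw [div_le_div_iff₀ (by positivity) (by positivity)]
    nlinarith
  have step1 : Real.log (Real.sqrt (a ^ 2 + (ϱ * s + b) ^ 2)) * ((s ^ 2 - 1) / (s ^ 2 + 1) ^ 2)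
      ≤ 2 * Real.sqrt u * (1 / s ^ 2) := by
    calc Real.log (Real.sqrt (a ^ 2 + (ϱ * s + b) ^ 2)) * ((s ^ 2 - 1) / (s ^ 2 + 1) ^ 2)
        ≤ 2 * Real.sqrt u * ((s ^ 2 - 1) / (s ^ 2 + 1) ^ 2) :=
          mul_le_mul_of_nonneg_right hlog hq0
      _ ≤ 2 * Real.sqrt u * (1 / s ^ 2) :=
          mul_le_mul_of_nonneg_left hq1 (by positivity)
  refine step1.trans ?_
  -- rewrite RHS
  have hsq : Real.sqrt u = Real.sqrt ϱ * Real.sqrt s := Real.sqrt_mul hϱ.le s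
  have hrho : ϱ ^ ((1:ℝ)/2) = Real.sqrt ϱ := (Real.sqrt_eq_rpow ϱ).symm
  have hs32 : s ^ ((3:ℝ)/2) = s * Real.sqrt s := by
    rw [show (3:ℝ)/2 = 1 + 1/2 by norm_num, Real.rpow_add hs0, Real.rpow_one,
      ← Real.sqrt_eq_rpow]
  rw [hrho, hs32, hsq]
  have hss : Real.sqrt s * Real.sqrt s = s := Real.mul_self_sqrt hs0.le
  have hsrs0 : 0 < Real.sqrt s := Real.sqrt_pos.mpr hs0
  have hsrϱ0 : 0 ≤ Real.sqrt ϱ := Real.sqrt_nonneg ϱ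
  rw [mul_one_div, div_le_div_iff₀ (by positivity) (by positivity)]
  have key : 2 * (Real.sqrt ϱ * Real.sqrt s) * (s * Real.sqrt s)
      = 2 * Real.sqrt ϱ * s * (Real.sqrt s * Real.sqrt s) := by ring
  rw [key, hss]
  nlinarith [mul_nonneg hsrϱ0 (mul_pos hs0 hs0).le]
end

section
/- Let Ω ⊆ ℝⁿ be a bounded open set and f : Ω → ℝ a C² function such that ‖∇f(x)‖ → ∞ as dist(x, ∂Ω) → 0, and suppose every critical point of f is nondegenerate (at every x ∈ Ω with ∇f(x) = 0, the second derivative D²f(x) : ℝⁿ → (ℝⁿ)* is invertible). Then there exists ε > 0 such that every C² function g : Ω → ℝ with sup_{x ∈ Ω} ( ‖∇g(x) − ∇f(x)‖ + ‖D²g(x) − D²f(x)‖ ) < ε has only nondegenerate critical points in Ω; in particular, g is again a Morse function. -/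
open Metric Set

section SphInf
variable {E F : Type*} [NormedAddCommGroup E] [NormedSpace ℝ E]
  [NormedAddCommGroup F] [NormedSpace ℝ F]

/-- The infimum of `‖A v‖` over the unit sphere. -/
noncomputable def sphInf (A : E →L[ℝ] F) : ℝ :=
  sInf ((fun v => ‖A v‖) '' Metric.sphere (0 : E) 1)

lemma sphInf_bdd (A : E →L[ℝ] F) :
    BddBelow ((fun v => ‖A v‖) '' Metric.sphere (0 : E) 1) :=
  ⟨0, by rintro y ⟨v, -, rfl⟩; positivity⟩

lemma sphInf_le (A : E →L[ℝ] F) {v : E} (hv : ‖v‖ = 1) : sphInf A ≤ ‖A v‖ :=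
  csInf_le (sphInf_bdd A) ⟨v, by simpa [mem_sphere_zero_iff_norm] using hv, rfl⟩

lemma le_sphInf (hne : (Metric.sphere (0 : E) 1).Nonempty) {A : E →L[ℝ] F} {c : ℝ}
    (h : ∀ v, ‖v‖ = 1 → c ≤ ‖A v‖) : c ≤ sphInf A :=
  le_csInf (hne.image _) (by
    rintro y ⟨v, hv, rfl⟩
    exact h v (by simpa [mem_sphere_zero_iff_norm] using hv))

lemma sphInf_nonneg (hne : (Metric.sphere (0 : E) 1).Nonempty) (A : E →L[ℝ] F) :
    0 ≤ sphInf A :=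
  le_sphInf hne fun v _ => norm_nonneg _

lemma sphInf_sub_le (hne : (Metric.sphere (0 : E) 1).Nonempty) (A B : E →L[ℝ] F) :
    sphInf A - ‖A - B‖ ≤ sphInf B := by
  refine le_sphInf hne fun v hv => ?_
  have h1 : sphInf A ≤ ‖A v‖ := sphInf_le A hv
  have h2 : ‖A v - B v‖ ≤ ‖A - B‖ := by
    calc ‖A v - B v‖ = ‖(A - B) v‖ := by simp
    _ ≤ ‖A - B‖ * ‖v‖ := (A - B).le_opNorm v
    _ = ‖A - B‖ := by rw [hv, mul_one]
  have := norm_sub_norm_le (A v) (B v)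
  linarith

lemma sphInf_continuous (hne : (Metric.sphere (0 : E) 1).Nonempty) :
    Continuous (sphInf : (E →L[ℝ] F) → ℝ) := by
  refine (LipschitzWith.of_dist_le_mul (K := 1) fun A B => ?_).continuous
  rw [Real.dist_eq, NNReal.coe_one, one_mul, dist_eq_norm, abs_sub_le_iff]
  constructor
  · have := sphInf_sub_le hne A B
    linarith
  · have := sphInf_sub_le hne B A
    have h : ‖B - A‖ = ‖A - B‖ := norm_sub_rev _ _
    linarith

lemma sphInf_pos [FiniteDimensional ℝ E] (hne : (Metric.sphere (0 : E) 1).Nonempty)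
    {A : E →L[ℝ] F} (hA : Function.Injective A) : 0 < sphInf A := by
  obtain ⟨v0, hv0, hmin⟩ := (isCompact_sphere (0 : E) 1).exists_isMinOn hne
    (A.continuous.norm.continuousOn)
  have h1 : ‖v0‖ = 1 := by simpa [mem_sphere_zero_iff_norm] using hv0
  have hv0ne : v0 ≠ 0 := by intro h; rw [h] at h1; simp at h1
  have hAv0 : A v0 ≠ 0 := fun h => hv0ne (hA (by simpa using h))
  have hpos : 0 < ‖A v0‖ := norm_pos_iff.mpr hAv0
  refine lt_of_lt_of_le hpos (le_sphInf hne fun v hv => ?_)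
  exact hmin (by simpa [mem_sphere_zero_iff_norm] using hv)

lemma injective_of_close (hne : (Metric.sphere (0 : E) 1).Nonempty)
    {A B : E →L[ℝ] F} (h : ‖B - A‖ < sphInf A) : Function.Injective B := by
  rw [injective_iff_map_eq_zero]
  intro v hv
  by_contra hvne
  set u : E := ‖v‖⁻¹ • v with hu
  have hvpos : 0 < ‖v‖ := norm_pos_iff.mpr hvne
  have hun : ‖u‖ = 1 := by
    rw [hu, norm_smul, norm_inv, norm_norm, inv_mul_cancel₀ hvpos.ne']
  have hBu : B u = 0 := by rw [hu, map_smul, hv, smul_zero]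
  have h1 : sphInf A ≤ ‖A u‖ := sphInf_le A hun
  have h2 : ‖A u - B u‖ ≤ ‖A - B‖ := by
    calc ‖A u - B u‖ = ‖(A - B) u‖ := by simp
    _ ≤ ‖A - B‖ * ‖u‖ := (A - B).le_opNorm u
    _ = ‖A - B‖ := by rw [hun, mul_one]
  rw [hBu, sub_zero] at h2
  rw [norm_sub_rev] at h
  linarith

lemma bijective_of_injective_dual [FiniteDimensional ℝ E] {A : E →L[ℝ] (E →L[ℝ] ℝ)}
    (h : Function.Injective A) : Function.Bijective A := by
  have hrank : Module.finrank ℝ E = Module.finrank ℝ (E →L[ℝ] ℝ) := by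
    rw [← (LinearMap.toContinuousLinearMap (𝕜 := ℝ) (E := E) (F' := ℝ)).finrank_eq,
      Module.finrank_linearMap_self]
  have hinj : Function.Injective (A : E →ₗ[ℝ] (E →L[ℝ] ℝ)) := h
  exact ⟨h, (LinearMap.injective_iff_surjective_of_finrank_eq_finrank hrank).mp hinj⟩

end SphInf

/-- Stability of the Morse property under C² perturbation: if `f` is `C²` on a
bounded open `Ω ⊆ ℝⁿ`, `‖∇f(x)‖ → ∞` as `dist(x, ∂Ω) → 0`, and all critical
points of `f` are nondegenerate, then every `C²` function `g` with
`‖∇g − ∇f‖ + ‖D²g − D²f‖ < ε` on `Ω` has only nondegenerate critical points. -/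
theorem morse_property_open_under_C2_perturbation
    {n : ℕ} (Ω : Set (Fin n → ℝ)) (hΩo : IsOpen Ω) (hΩb : Bornology.IsBounded Ω)
    (f : (Fin n → ℝ) → ℝ) (f' : (Fin n → ℝ) → ((Fin n → ℝ) →L[ℝ] ℝ))
    (f'' : (Fin n → ℝ) → ((Fin n → ℝ) →L[ℝ] ((Fin n → ℝ) →L[ℝ] ℝ)))
    (hf : ∀ x ∈ Ω, HasFDerivAt f (f' x) x)
    (hf' : ∀ x ∈ Ω, HasFDerivAt f' (f'' x) x)
    (hf'' : ContinuousOn f'' Ω)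
    (hblow : ∀ M > 0, ∃ δ > 0, ∀ x ∈ Ω, Metric.infDist x (frontier Ω) < δ → M ≤ ‖f' x‖)
    (hnondeg : ∀ x ∈ Ω, f' x = 0 → Function.Bijective (f'' x)) :
    ∃ ε > 0, ∀ (g : (Fin n → ℝ) → ℝ) (g' : (Fin n → ℝ) → ((Fin n → ℝ) →L[ℝ] ℝ))
      (g'' : (Fin n → ℝ) → ((Fin n → ℝ) →L[ℝ] ((Fin n → ℝ) →L[ℝ] ℝ))),
      (∀ x ∈ Ω, HasFDerivAt g (g' x) x) →
      (∀ x ∈ Ω, HasFDerivAt g' (g'' x) x) →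
      ContinuousOn g'' Ω →
      (∀ x ∈ Ω, ‖g' x - f' x‖ + ‖g'' x - f'' x‖ < ε) →
      ∀ x ∈ Ω, g' x = 0 → Function.Bijective (g'' x) := by
  rcases Nat.eq_zero_or_pos n with hn | hn
  · -- trivial case `n = 0`: everything is bijective between subsingletons
    subst hn
    haveI : Subsingleton (Fin 0 → ℝ) := ⟨fun a b => funext fun i => i.elim0⟩
    refine ⟨1, one_pos, ?_⟩
    rintro g g' g'' - - - - x - -
    constructor
    · intro a b _; exact Subsingleton.elim a b
    · intro y
      refine ⟨0, ?_⟩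
      ext v
      rw [Subsingleton.elim v 0, map_zero, map_zero]
  · -- main case `n ≥ 1`
    haveI : Nonempty (Fin n) := ⟨⟨0, hn⟩⟩
    have hne : (Metric.sphere (0 : Fin n → ℝ) 1).Nonempty :=
      NormedSpace.sphere_nonempty.mpr zero_le_one
    obtain ⟨δ, hδ, hδ'⟩ := hblow 1 one_pos
    set K : Set (Fin n → ℝ) :=
      closure Ω ∩ {x | δ ≤ Metric.infDist x (frontier Ω)} with hK
    have hKΩ : K ⊆ Ω := by
      rintro y ⟨hy1, hy2⟩
      by_contra hy
      have hyf : y ∈ frontier Ω := ⟨hy1, by rwa [hΩo.interior_eq]⟩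
      have h0 : Metric.infDist y (frontier Ω) = 0 := Metric.infDist_zero_of_mem hyf
      have hy2' : δ ≤ Metric.infDist y (frontier Ω) := hy2
      rw [h0] at hy2'
      linarith
    have hKc : IsCompact K :=
      Metric.isCompact_of_isClosed_isBounded
        (isClosed_closure.inter (isClosed_le continuous_const
          (Metric.continuous_infDist_pt _)))
        (hΩb.closure.subset inter_subset_left)
    set θ : (Fin n → ℝ) → ℝ := fun x => ‖f' x‖ + sphInf (f'' x) with hθ
    have hf'cont : ContinuousOn f' Ω := fun x hx =>
      (hf' x hx).continuousAt.continuousWithinAt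
    have hθcont : ContinuousOn θ K :=
      ((hf'cont.mono hKΩ).norm).add
        ((sphInf_continuous hne).comp_continuousOn (hf''.mono hKΩ))
    have hθpos : ∀ x ∈ K, 0 < θ x := by
      intro x hx
      rcases eq_or_ne (f' x) 0 with h | h
      · have hp := sphInf_pos hne (hnondeg x (hKΩ hx) h).injective
        have : ‖f' x‖ = 0 := by rw [h, norm_zero]
        simp only [hθ]; linarith
      · have h1 : 0 < ‖f' x‖ := norm_pos_iff.mpr h
        have h2 := sphInf_nonneg hne (f'' x)
        simp only [hθ]; linarith
    obtain ⟨c0, hc0pos, hc0⟩ : ∃ c0 > 0, ∀ x ∈ K, c0 ≤ θ x := by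
      rcases K.eq_empty_or_nonempty with h | h
      · exact ⟨1, one_pos, by simp [h]⟩
      · obtain ⟨x0, hx0K, hmin⟩ := hKc.exists_isMinOn h hθcont
        exact ⟨θ x0, hθpos x0 hx0K, fun x hx => hmin hx⟩
    refine ⟨min (c0 / 2) 1, lt_min (by linarith) one_pos, ?_⟩
    intro g g' g'' hg hg' hg''cont hclose x hx hcrit
    have hd := hclose x hx
    have hgf' : ‖g' x - f' x‖ = ‖f' x‖ := by rw [hcrit, zero_sub, norm_neg]
    have hg''nn : 0 ≤ ‖g'' x - f'' x‖ := by positivity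
    have hf'small : ‖f' x‖ < min (c0 / 2) 1 := by rw [← hgf']; linarith
    have hf'lt1 : ‖f' x‖ < 1 := lt_of_lt_of_le hf'small (min_le_right _ _)
    have hxK : x ∈ K := by
      refine ⟨subset_closure hx, ?_⟩
      by_contra hcon
      exact absurd (hδ' x hx (by simpa using not_le.mp hcon)) (not_le.mpr hf'lt1)
    have hθx := hc0 x hxK
    have hf'lt : ‖f' x‖ < c0 / 2 := lt_of_lt_of_le hf'small (min_le_left _ _)
    have hsph : c0 / 2 < sphInf (f'' x) := by
      simp only [hθ] at hθx; linarith
    have hg''small : ‖g'' x - f'' x‖ < sphInf (f'' x) := by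
      have : ‖g'' x - f'' x‖ < min (c0 / 2) 1 := by
        have := norm_nonneg (g' x - f' x); linarith
      have := lt_of_lt_of_le this (min_le_left _ _)
      linarith
    exact bijective_of_injective_dual (injective_of_close hne hg''small)
end

section
/- Let m ≥ 2, let σ₁, …, σ_m > 0 be real numbers, and let B ⊂ ℝ² be a bounded set. Define W on the set of pairwise distinct m-tuples y = (y₁, …, y_m) ∈ (ℝ²)^m by W(y) = Σ_{i≠j} σ_i σ_j · log( 1/‖y_i − y_j‖ ) (sum over ordered pairs i ≠ j). Then for every M > 0 there exists δ > 0 such that for every m-tuple of pairwise distinct points y₁, …, y_m ∈ B with min_{i≠j} ‖y_i − y_j‖ ≤ δ, the gradient of W at y (as a vector in (ℝ²)^m) has Euclidean norm at least M. -/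
open Finset
open scoped RealInnerProductSpace

private lemma mono_pigeonhole (g : ℕ → ℕ) (n : ℕ) (hmono : Monotone g) (h0 : 1 ≤ g 0)
    (hb : ∀ k, g k ≤ n) : ∃ k < n, g k = g (k+1) := by
  by_contra h
  push_neg at h
  have key : ∀ k, k ≤ n → k + 1 ≤ g k := by
    intro k
    induction k with
    | zero => intro _; exact h0
    | succ k ih =>
      intro hk
      have h1 : g k < g (k+1) := lt_of_le_of_ne (hmono (Nat.le_succ k)) (h k (by omega))
      have := ih (by omega)
      omega
  have := key n le_rfl
  have := hb n
  omega

set_option maxHeartbeats 4000000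

/-- Blow-up of the gradient of the logarithmic interaction energy
`W(y) = ∑_{i≠j} σ_i σ_j log(1/‖y_i − y_j‖)` as points in a bounded set `B ⊂ ℝ²`
collide: for every `M > 0` there is `δ > 0` such that whenever two of the
pairwise distinct points are at distance `≤ δ`, the Euclidean norm of the
gradient `(∇_{y_i}W(y))_i`, with `∇_{y_i}W(y) = −2σ_i ∑_{j≠i} σ_j (y_i − y_j)/‖y_i − y_j‖²`,
is at least `M`. -/
theorem gradient_blowup_on_collision
    {m : ℕ} (hm : 2 ≤ m) (σ : Fin m → ℝ) (hσ : ∀ i, 0 < σ i)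
    (B : Set (EuclideanSpace ℝ (Fin 2))) (hB : Bornology.IsBounded B) :
    ∀ M > 0, ∃ δ > 0, ∀ y : Fin m → EuclideanSpace ℝ (Fin 2),
      (∀ i, y i ∈ B) → Function.Injective y →
      (∃ i j, i ≠ j ∧ ‖y i - y j‖ ≤ δ) →
      M ≤ Real.sqrt (∑ i,
        ‖(-2 * σ i) • ∑ j ∈ Finset.univ \ {i}, (σ j / ‖y i - y j‖ ^ 2) • (y i - y j)‖ ^ 2) := by
  intro M hM
  haveI : NeZero m := ⟨by omega⟩
  have hne : (Finset.univ : Finset (Fin m)).Nonempty := univ_nonempty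
  set σm : ℝ := univ.inf' hne σ with hσm_def
  set σM : ℝ := univ.sup' hne σ with hσM_def
  have hσm_pos : 0 < σm := by
    rw [hσm_def, Finset.lt_inf'_iff]
    exact fun i _ => hσ i
  have hσm_le : ∀ i, σm ≤ σ i := fun i => inf'_le σ (mem_univ i)
  have hle_σM : ∀ i, σ i ≤ σM := fun i => le_sup' σ (mem_univ i)
  have hσM_pos : 0 < σM := lt_of_lt_of_le hσm_pos ((hσm_le ⟨0, by omega⟩).trans (hle_σM ⟨0, by omega⟩))
  set L : ℝ := 1 + 4 * m^2 * σM^2 / σm^2 with hL_def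
  have hmpos : (0:ℝ) < m := by positivity
  have hL1 : 1 < L := by
    rw [hL_def]
    have : 0 < 4 * (m:ℝ)^2 * σM^2 / σm^2 := by positivity
    linarith
  have hL0 : 0 < L := by linarith
  refine ⟨σm^2 / (m * M * L^m), by positivity, ?_⟩
  intro y _ hinj ⟨i0, j0, hij, hle⟩
  set δ : ℝ := σm^2 / (m * M * L^m) with hδ_def
  set d : ℝ := ‖y i0 - y j0‖ with hd_def
  have hd0 : 0 < d := by
    rw [hd_def, norm_pos_iff, sub_ne_zero]
    exact fun h => hij (hinj h)
  -- distances to y i0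
  set r : Fin m → ℝ := fun j => ‖y j - y i0‖ with hr_def
  have hrj0 : r j0 = d := by rw [hr_def, hd_def, norm_sub_rev]
  -- pigeonhole on scales
  set g : ℕ → ℕ := fun k => ((univ \ {i0}).filter (fun j => r j ≤ d * L^k)).card with hg_def
  have hgmono : Monotone g := by
    intro a b hab
    apply Finset.card_le_card
    intro j hj
    simp only [Finset.mem_filter] at hj ⊢
    refine ⟨hj.1, le_trans hj.2 ?_⟩
    have : L^a ≤ L^b := pow_le_pow_right₀ (le_of_lt hL1) hab
    nlinarith
  have hg0 : 1 ≤ g 0 := by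
    rw [hg_def]
    apply Finset.card_pos.mpr
    exact ⟨j0, by simp [hrj0, Ne.symm hij, hd0.le]⟩
  have hgb : ∀ k, g k ≤ m - 1 := by
    intro k
    rw [hg_def]
    calc ((univ \ {i0}).filter _).card ≤ (univ \ {i0}).card := Finset.card_filter_le _ _
    _ = m - 1 := by rw [Finset.card_sdiff_of_subset (by simp)]; simp
  obtain ⟨k, hkm, hgk⟩ := mono_pigeonhole g (m-1) hgmono hg0 hgb
  set t : ℝ := d * L^k with ht_def
  have ht0 : 0 < t := by positivity
  have htd : d ≤ t := by
    rw [ht_def]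
    nlinarith [one_le_pow₀ (le_of_lt hL1) (n := k), hd0]
  -- separation property
  have hsep : ∀ j, j ≠ i0 → t < r j → L * t < r j := by
    intro j hj hjt
    have hsub : (univ \ {i0}).filter (fun j => r j ≤ d * L^k)
        ⊆ (univ \ {i0}).filter (fun j => r j ≤ d * L^(k+1)) := by
      intro j' hj'
      simp only [Finset.mem_filter] at hj' ⊢
      refine ⟨hj'.1, le_trans hj'.2 ?_⟩
      have : L^k ≤ L^(k+1) := pow_le_pow_right₀ (le_of_lt hL1) (Nat.le_succ k)
      nlinarith
    have heq : (univ \ {i0}).filter (fun j => r j ≤ d * L^k)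
        = (univ \ {i0}).filter (fun j => r j ≤ d * L^(k+1)) :=
      Finset.eq_of_subset_of_card_le hsub (le_of_eq hgk.symm)
    by_contra hc
    push_neg at hc
    have hjmem : j ∈ (univ \ {i0}).filter (fun j => r j ≤ d * L^(k+1)) := by
      simp only [Finset.mem_filter, Finset.mem_sdiff, Finset.mem_univ, Finset.mem_singleton]
      refine ⟨⟨trivial, hj⟩, ?_⟩
      calc r j ≤ L * t := hc
      _ = d * L^(k+1) := by rw [ht_def]; ring
    rw [← heq] at hjmem
    have := (Finset.mem_filter.mp hjmem).2
    rw [← ht_def] at this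
    linarith
  -- the cluster
  set S : Finset (Fin m) := insert i0 ((univ \ {i0}).filter (fun j => r j ≤ t)) with hS_def
  have hi0S : i0 ∈ S := Finset.mem_insert_self _ _
  have hj0S : j0 ∈ S := by
    rw [hS_def]
    apply Finset.mem_insert_of_mem
    simp [hrj0, Ne.symm hij, htd]
  have hS_near : ∀ i ∈ S, r i ≤ t := by
    intro i hi
    rw [hS_def, Finset.mem_insert] at hi
    rcases hi with h | h
    · simp [hr_def, h, ht0.le]
    · exact (Finset.mem_filter.mp h).2
  have hS_far : ∀ i ∈ S, ∀ j ∉ S, (L - 1) * t ≤ ‖y i - y j‖ := by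
    intro i hi j hj
    have hji0 : j ≠ i0 := fun h => hj (h ▸ hi0S)
    have hjt : t < r j := by
      by_contra hc
      push_neg at hc
      exact hj (by rw [hS_def]; exact Finset.mem_insert_of_mem (by simp [hji0, hc]))
    have hLt : L * t < r j := hsep j hji0 hjt
    have htri : r j ≤ ‖y j - y i‖ + r i := by
      have : y j - y i0 = (y j - y i) + (y i - y i0) := by abel
      rw [hr_def]
      simp only []
      rw [this]
      exact norm_add_le _ _
    have hri : r i ≤ t := hS_near i hi
    have : ‖y i - y j‖ = ‖y j - y i‖ := norm_sub_rev _ _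
    nlinarith
  -- the gradient vectors
  set gi : Fin m → EuclideanSpace ℝ (Fin 2) := fun i =>
    (-2 * σ i) • ∑ j ∈ univ \ {i}, (σ j / ‖y i - y j‖ ^ 2) • (y i - y j) with hgi_def
  set G : ℝ := Real.sqrt (∑ i, ‖gi i‖ ^ 2) with hG_def
  have hG0 : 0 ≤ G := Real.sqrt_nonneg _
  -- the pair interaction terms
  set b : Fin m → Fin m → ℝ := fun i j =>
    σ i * σ j / ‖y i - y j‖ ^ 2 * ⟪y i - y j, y i - y i0⟫ with hb_def
  have hb_diag : ∀ i, b i i = 0 := by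
    intro i
    simp [hb_def, sub_self]
  have hyne : ∀ i j : Fin m, i ≠ j → y i - y j ≠ 0 := by
    intro i j h
    rw [sub_ne_zero]
    exact fun he => h (hinj he)
  have hsym : ∀ i j, i ≠ j → b i j + b j i = σ i * σ j := by
    intro i j h
    have hn : ‖y i - y j‖ ≠ 0 := norm_ne_zero_iff.mpr (hyne i j h)
    have h2 : y j - y i = -(y i - y j) := by abel
    have h1 : ⟪y i - y j, y i - y i0⟫ - ⟪y i - y j, y j - y i0⟫ = ‖y i - y j‖ ^ 2 := by
      rw [← inner_sub_right, ← real_inner_self_eq_norm_sq]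
      congr 1
      abel
    have hn2 : ‖y i - y j‖ ^ 2 ≠ 0 := pow_ne_zero _ hn
    simp only [hb_def]
    rw [norm_sub_rev (y j) (y i), h2, inner_neg_left]
    calc σ i * σ j / ‖y i - y j‖ ^ 2 * ⟪y i - y j, y i - y i0⟫
          + σ j * σ i / ‖y i - y j‖ ^ 2 * -⟪y i - y j, y j - y i0⟫
        = σ i * σ j / ‖y i - y j‖ ^ 2
            * (⟪y i - y j, y i - y i0⟫ - ⟪y i - y j, y j - y i0⟫) := by ring
      _ = σ i * σ j / ‖y i - y j‖ ^ 2 * ‖y i - y j‖ ^ 2 := by rw [h1]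
      _ = σ i * σ j := div_mul_cancel₀ _ hn2
  have hip : ∀ i, ⟪gi i, y i - y i0⟫ = -2 * ∑ j ∈ univ \ {i}, b i j := by
    intro i
    rw [hgi_def]
    simp only []
    rw [real_inner_smul_left, sum_inner, Finset.mul_sum, Finset.mul_sum]
    apply Finset.sum_congr rfl
    intro j _
    rw [real_inner_smul_left, hb_def]
    ring
  -- decompose rows
  have hdisj : ∀ i : Fin m, Disjoint (S \ {i}) (univ \ S) := by
    intro i
    rw [Finset.disjoint_left]
    intro a ha hb'
    exact (Finset.mem_sdiff.mp hb').2 (Finset.mem_sdiff.mp ha).1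
  have hdecomp : ∀ i ∈ S, (univ \ {i} : Finset (Fin m)) = (S \ {i}) ∪ (univ \ S) := by
    intro i hi
    ext j
    simp only [Finset.mem_sdiff, Finset.mem_union, Finset.mem_univ, Finset.mem_singleton,
      true_and]
    have : j ∉ S → j ≠ i := fun h he => h (he ▸ hi)
    tauto
  have hrow : ∀ i ∈ S, ∑ j ∈ univ \ {i}, b i j
      = (∑ j ∈ S, b i j) + ∑ j ∈ univ \ S, b i j := by
    intro i hi
    rw [hdecomp i hi, Finset.sum_union (hdisj i)]
    congr 1
    rw [← Finset.erase_eq]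
    exact Finset.sum_erase _ (hb_diag i)
  set T : ℝ := ∑ i ∈ S, ∑ j ∈ S, b i j with hT_def
  set U : ℝ := ∑ i ∈ S, ∑ j ∈ univ \ S, b i j with hU_def
  -- Q = -2 (T + U)
  set Q : ℝ := ∑ i ∈ S, ⟪gi i, y i - y i0⟫ with hQ_def
  have hQ : Q = -2 * (T + U) := by
    rw [hQ_def]
    calc ∑ i ∈ S, ⟪gi i, y i - y i0⟫
        = ∑ i ∈ S, (-2 * ∑ j ∈ univ \ {i}, b i j) := Finset.sum_congr rfl (fun i _ => hip i)
      _ = -2 * ∑ i ∈ S, ∑ j ∈ univ \ {i}, b i j := by rw [Finset.mul_sum]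
      _ = -2 * ∑ i ∈ S, ((∑ j ∈ S, b i j) + ∑ j ∈ univ \ S, b i j) := by
          congr 1
          exact Finset.sum_congr rfl hrow
      _ = -2 * (T + U) := by rw [Finset.sum_add_distrib]
  -- lower bound for T
  have hterm : ∀ i j : Fin m, 0 ≤ b i j + b j i := by
    intro i j
    by_cases h : i = j
    · subst h; simp [hb_diag]
    · rw [hsym i j h]; exact mul_nonneg (hσ i).le (hσ j).le
  have h2T : 2 * T = ∑ i ∈ S, ∑ j ∈ S, (b i j + b j i) := by
    have hcomm : ∑ i ∈ S, ∑ j ∈ S, b j i = T := Finset.sum_comm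
    calc 2 * T = T + T := two_mul T
      _ = (∑ i ∈ S, ∑ j ∈ S, b i j) + ∑ i ∈ S, ∑ j ∈ S, b j i := by rw [hT_def, hcomm]
      _ = ∑ i ∈ S, ((∑ j ∈ S, b i j) + ∑ j ∈ S, b j i) := (Finset.sum_add_distrib).symm
      _ = ∑ i ∈ S, ∑ j ∈ S, (b i j + b j i) := by
          apply Finset.sum_congr rfl
          intro i _
          exact (Finset.sum_add_distrib).symm
  have hT_lb : σm ^ 2 ≤ T := by
    have hrow_nonneg : ∀ i ∈ S, 0 ≤ ∑ j ∈ S, (b i j + b j i) := by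
      intro i _
      exact Finset.sum_nonneg (fun j _ => hterm i j)
    have hi0row : σ i0 * σ j0 ≤ ∑ j ∈ S, (b i0 j + b j i0) := by
      calc σ i0 * σ j0 = b i0 j0 + b j0 i0 := (hsym i0 j0 hij).symm
        _ ≤ ∑ j ∈ S, (b i0 j + b j i0) :=
            Finset.single_le_sum (f := fun j => b i0 j + b j i0)
              (fun j _ => hterm i0 j) hj0S
    have hj0row : σ j0 * σ i0 ≤ ∑ j ∈ S, (b j0 j + b j j0) := by
      calc σ j0 * σ i0 = b j0 i0 + b i0 j0 := (hsym j0 i0 (Ne.symm hij)).symm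
        _ ≤ ∑ j ∈ S, (b j0 j + b j j0) :=
            Finset.single_le_sum (f := fun j => b j0 j + b j j0)
              (fun j _ => hterm j0 j) hi0S
    have hpair : σ i0 * σ j0 + σ j0 * σ i0
        ≤ ∑ i ∈ S, ∑ j ∈ S, (b i j + b j i) := by
      have hsub : ({i0, j0} : Finset (Fin m)) ⊆ S := by
        intro x hx
        rcases Finset.mem_insert.mp hx with h | h
        · exact h ▸ hi0S
        · exact (Finset.mem_singleton.mp h) ▸ hj0S
      calc σ i0 * σ j0 + σ j0 * σ i0
          ≤ ∑ i ∈ ({i0, j0} : Finset (Fin m)), ∑ j ∈ S, (b i j + b j i) := by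
            rw [Finset.sum_pair hij]
            exact add_le_add hi0row hj0row
        _ ≤ ∑ i ∈ S, ∑ j ∈ S, (b i j + b j i) :=
            Finset.sum_le_sum_of_subset_of_nonneg hsub (fun i hi _ => hrow_nonneg i hi)
    have hσσ : σm * σm ≤ σ i0 * σ j0 := by
      have := hσm_le i0
      have := hσm_le j0
      nlinarith [hσm_pos]
    nlinarith [h2T, hpair, hσσ]
  -- upper bound for |U|
  have hb_bound : ∀ i ∈ S, ∀ j ∈ univ \ S, |b i j| ≤ σM ^ 2 / (L - 1) := by
    intro i hi j hj
    have hjS : j ∉ S := (Finset.mem_sdiff.mp hj).2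
    have hfar := hS_far i hi j hjS
    have hLt0 : 0 < (L - 1) * t := by nlinarith
    have hn0 : 0 < ‖y i - y j‖ := lt_of_lt_of_le hLt0 hfar
    have hw : ‖y i - y i0‖ ≤ t := hS_near i hi
    have hipb : |⟪y i - y j, y i - y i0⟫| ≤ ‖y i - y j‖ * t := by
      calc |⟪y i - y j, y i - y i0⟫| ≤ ‖y i - y j‖ * ‖y i - y i0‖ :=
            abs_real_inner_le_norm _ _
        _ ≤ ‖y i - y j‖ * t := by nlinarith
    have h1 : |b i j| ≤ σ i * σ j * t / ‖y i - y j‖ := by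
      rw [hb_def]
      simp only []
      rw [abs_mul, abs_of_nonneg (show (0:ℝ) ≤ σ i * σ j / ‖y i - y j‖ ^ 2 by
        have := (hσ i).le; have := (hσ j).le; positivity)]
      calc σ i * σ j / ‖y i - y j‖ ^ 2 * |⟪y i - y j, y i - y i0⟫|
          ≤ σ i * σ j / ‖y i - y j‖ ^ 2 * (‖y i - y j‖ * t) := by
            apply mul_le_mul_of_nonneg_left hipb (by
              have := (hσ i).le; have := (hσ j).le; positivity)
        _ = σ i * σ j * t / ‖y i - y j‖ := by field_simp
    have h2 : σ i * σ j * t / ‖y i - y j‖ ≤ σM * σM * t / ((L - 1) * t) := by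
      apply div_le_div₀ (by positivity) ?_ hLt0 hfar
      have h1 := hle_σM i
      have h2 := hle_σM j
      have h3 := hσ i
      have h4 := hσ j
      nlinarith [ht0.le, mul_le_mul h1 h2 h4.le (le_of_lt (lt_of_lt_of_le h3 h1))]
    have h3 : σM * σM * t / ((L - 1) * t) = σM ^ 2 / (L - 1) := by
      rw [mul_comm (L-1) t, ← div_div]
      field_simp
    calc |b i j| ≤ σ i * σ j * t / ‖y i - y j‖ := h1
      _ ≤ σM * σM * t / ((L - 1) * t) := h2
      _ = σM ^ 2 / (L - 1) := h3
  have hcardS : (S.card : ℝ) ≤ m := by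
    have := Finset.card_le_univ S
    simp only [Finset.card_univ, Fintype.card_fin] at this
    exact_mod_cast this
  have hcardSc : ((univ \ S).card : ℝ) ≤ m := by
    have := Finset.card_le_univ (univ \ S)
    simp only [Finset.card_univ, Fintype.card_fin] at this
    exact_mod_cast this
  have hU_bound : |U| ≤ σm ^ 2 / 4 := by
    have hq0 : (0:ℝ) ≤ σM ^ 2 / (L - 1) := by
      apply div_nonneg (by positivity)
      linarith
    have step1 : |U| ≤ ∑ i ∈ S, ∑ j ∈ univ \ S, |b i j| := by
      calc |U| ≤ ∑ i ∈ S, |∑ j ∈ univ \ S, b i j| := Finset.abs_sum_le_sum_abs _ _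
        _ ≤ ∑ i ∈ S, ∑ j ∈ univ \ S, |b i j| :=
            Finset.sum_le_sum (fun i _ => Finset.abs_sum_le_sum_abs _ _)
    have step2 : ∑ i ∈ S, ∑ j ∈ univ \ S, |b i j|
        ≤ (S.card : ℝ) * ((univ \ S).card : ℝ) * (σM ^ 2 / (L - 1)) := by
      calc ∑ i ∈ S, ∑ j ∈ univ \ S, |b i j|
          ≤ ∑ i ∈ S, ∑ _j ∈ univ \ S, (σM ^ 2 / (L - 1)) :=
            Finset.sum_le_sum (fun i hi =>
              Finset.sum_le_sum (fun j hj => hb_bound i hi j hj))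
        _ = (S.card : ℝ) * ((univ \ S).card : ℝ) * (σM ^ 2 / (L - 1)) := by
            simp [Finset.sum_const, nsmul_eq_mul]
            ring
    have step3 : (S.card : ℝ) * ((univ \ S).card : ℝ) * (σM ^ 2 / (L - 1))
        ≤ (m : ℝ) * m * (σM ^ 2 / (L - 1)) := by
      apply mul_le_mul_of_nonneg_right ?_ hq0
      have h0S : (0:ℝ) ≤ (S.card : ℝ) := Nat.cast_nonneg _
      have h0Sc : (0:ℝ) ≤ ((univ \ S).card : ℝ) := Nat.cast_nonneg _
      nlinarith
    have step4 : (m : ℝ) * m * (σM ^ 2 / (L - 1)) = σm ^ 2 / 4 := by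
      have hL1' : L - 1 = 4 * m ^ 2 * σM ^ 2 / σm ^ 2 := by rw [hL_def]; ring
      rw [hL1']
      field_simp
    linarith
  -- lower bound for -Q
  have hQ_lb : σm ^ 2 ≤ -Q := by
    rw [hQ]
    have : -σm ^ 2 / 4 ≤ U := by
      have := abs_le.mp hU_bound
      linarith [this.1]
    nlinarith
  -- upper bound for |Q|
  have hgiG : ∀ i, ‖gi i‖ ≤ G := by
    intro i
    have h1 : ‖gi i‖ ^ 2 ≤ ∑ j, ‖gi j‖ ^ 2 :=
      Finset.single_le_sum (f := fun j => ‖gi j‖ ^ 2) (fun j _ => by positivity) (mem_univ i)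
    calc ‖gi i‖ = Real.sqrt (‖gi i‖ ^ 2) := (Real.sqrt_sq (norm_nonneg _)).symm
      _ ≤ G := Real.sqrt_le_sqrt h1
  have hQ_ub : |Q| ≤ (m : ℝ) * t * G := by
    calc |Q| ≤ ∑ i ∈ S, |⟪gi i, y i - y i0⟫| := Finset.abs_sum_le_sum_abs _ _
      _ ≤ ∑ _i ∈ S, G * t := by
          apply Finset.sum_le_sum
          intro i hi
          calc |⟪gi i, y i - y i0⟫| ≤ ‖gi i‖ * ‖y i - y i0‖ := abs_real_inner_le_norm _ _
            _ ≤ G * t := by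
                have := hgiG i
                have := hS_near i hi
                have := norm_nonneg (gi i)
                have := norm_nonneg (y i - y i0)
                nlinarith
      _ = (S.card : ℝ) * (G * t) := by simp [Finset.sum_const, nsmul_eq_mul]
      _ ≤ (m : ℝ) * t * G := by nlinarith [mul_nonneg hG0 ht0.le]
  -- conclude
  have hδ0 : 0 < δ := by rw [hδ_def]; positivity
  have ht_le : t ≤ δ * L ^ m := by
    rw [ht_def]
    have hk : L ^ k ≤ L ^ m := pow_le_pow_right₀ (le_of_lt hL1) (by omega)
    exact mul_le_mul hle hk (pow_pos hL0 k).le hδ0.le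
  have hδLm : (m : ℝ) * (δ * L ^ m) * M = σm ^ 2 := by
    rw [hδ_def]
    field_simp
  have hmt : (m : ℝ) * t * M ≤ σm ^ 2 := by
    rw [← hδLm]
    have : (0:ℝ) ≤ (m:ℝ) * M := by positivity
    nlinarith
  have hfinal : σm ^ 2 ≤ (m : ℝ) * t * G := by
    calc σm ^ 2 ≤ -Q := hQ_lb
      _ ≤ |Q| := neg_le_abs Q
      _ ≤ (m : ℝ) * t * G := hQ_ub
  have hmt0 : 0 < (m : ℝ) * t := by positivity
  show M ≤ G
  nlinarith [hfinal, hmt, hmt0, hG0]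
end
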